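/- The number of Dyck paths of length 2n that have a local minimum at position n (i.e., a down-step into n followed by an up-step) equals the number of Dyck paths of length 2n − 2 passing through the point (n − 1, γ(n) + 1); in particular, the total number of Dyck paths of length 2n with a local minimum at n equals C_{n−1}, the (n−1)-st Catalan number, when n is even. -/

import Mathlib

/-- A Dyck path of length `2n`, encoded as a function `ℕ → ℤ` that is zero
outside `[0, 2n]`. -/
def IsDyckPathFn (n : ℕ) (γ : ℕ → ℤ) : Prop :=
  γ 0 = 0 ∧ γ (2 * n) = 0 ∧ (∀ x, x ≤ 2 * n → 0 ≤ γ x) ∧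
    (∀ x, x < 2 * n → γ (x + 1) = γ x + 1 ∨ γ (x + 1) = γ x - 1) ∧
    (∀ x, 2 * n ≤ x → γ x = 0)

open List DyckStep

/-! ### From Dyck words to Dyck path functions and back -/

/-- Height of the lattice path of a list of steps after `k` steps. -/
def wordHeight (l : List DyckStep) (k : ℕ) : ℤ :=
  ((l.take k).count U : ℤ) - ((l.take k).count D : ℤ)

lemma wordHeight_zero (l : List DyckStep) : wordHeight l 0 = 0 := by
  simp [wordHeight]

lemma wordHeight_succ (l : List DyckStep) (k : ℕ) (hk : k < l.length) :
    wordHeight l (k + 1) = wordHeight l k + (if l[k] = U then 1 else -1) := by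
  have h := List.take_concat_get hk
  rw [wordHeight, wordHeight, ← h]
  rcases l[k].dichotomy with h' | h' <;>
    simp [h', List.concat_eq_append, List.count_append] <;> omega

lemma wordHeight_of_le (l : List DyckStep) {k : ℕ} (hk : l.length ≤ k) :
    wordHeight l k = wordHeight l l.length := by
  rw [wordHeight, wordHeight, List.take_of_length_le hk, List.take_of_length_le le_rfl]

lemma count_U_add_count_D (l : List DyckStep) : l.count U + l.count D = l.length := by
  rw [List.length_eq_countP_add_countP (· == U)]
  congr 1
  apply List.countP_congr
  intro x _
  cases x <;> simp

/-- The path function of a Dyck word. -/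
def pathOf (p : DyckWord) : ℕ → ℤ := wordHeight p.toList

lemma pathOf_isDyck (p : DyckWord) : IsDyckPathFn p.semilength (pathOf p) := by
  have hlen : 2 * p.semilength = p.toList.length := p.two_mul_semilength_eq_length
  have hzero : ∀ x, 2 * p.semilength ≤ x → pathOf p x = 0 := by
    intro x hx
    rw [pathOf, wordHeight_of_le _ (hlen ▸ hx), wordHeight, List.take_of_length_le le_rfl,
      p.count_U_eq_count_D]
    ring
  refine ⟨wordHeight_zero _, hzero _ le_rfl, ?_, ?_, hzero⟩
  · intro x _
    have := p.count_D_le_count_U x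
    rw [pathOf, wordHeight]
    omega
  · intro x hx
    rw [pathOf, wordHeight_succ _ x (hlen ▸ hx)]
    split <;> [left; right] <;> ring

/-- The list of steps of a Dyck path function. -/
def stepsOf (m : ℕ) (γ : ℕ → ℤ) : List DyckStep :=
  (List.range (2 * m)).map fun i => if γ (i + 1) = γ i + 1 then U else D

lemma stepsOf_length (m : ℕ) (γ : ℕ → ℤ) : (stepsOf m γ).length = 2 * m := by
  simp [stepsOf]

lemma stepsOf_getElem (m : ℕ) (γ : ℕ → ℤ) (k : ℕ) (hk : k < 2 * m) :
    (stepsOf m γ)[k]'(by rw [stepsOf_length]; exact hk)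
      = if γ (k + 1) = γ k + 1 then U else D := by
  simp [stepsOf]

lemma stepsOf_height {m : ℕ} {γ : ℕ → ℤ} (hγ : IsDyckPathFn m γ) :
    ∀ k, k ≤ 2 * m → wordHeight (stepsOf m γ) k = γ k := by
  intro k
  induction k with
  | zero => intro _; rw [wordHeight_zero, hγ.1]
  | succ k ih =>
    intro hk
    have hk' : k < 2 * m := by omega
    have hlt : k < (stepsOf m γ).length := by rw [stepsOf_length]; exact hk'
    have hih : wordHeight (stepsOf m γ) k = γ k := ih (by omega)
    rw [wordHeight_succ _ k hlt, hih, stepsOf_getElem m γ k hk']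
    rcases hγ.2.2.2.1 k hk' with h | h
    · rw [h]; simp
    · rw [h, if_neg (show γ k - 1 ≠ γ k + 1 by omega),
        show (if (D : DyckStep) = U then (1:ℤ) else -1) = -1 from rfl]
      ring

lemma stepsOf_take_counts {m : ℕ} {γ : ℕ → ℤ} (hγ : IsDyckPathFn m γ) (k : ℕ) (hk : k ≤ 2 * m) :
    (((stepsOf m γ).take k).count U : ℤ) - (((stepsOf m γ).take k).count D : ℤ) = γ k :=
  stepsOf_height hγ k hk

/-- The Dyck word of a Dyck path function. -/
def wordOf (m : ℕ) (γ : ℕ → ℤ) (hγ : IsDyckPathFn m γ) : DyckWord where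
  toList := stepsOf m γ
  count_U_eq_count_D := by
    have h := stepsOf_take_counts hγ (2 * m) le_rfl
    rw [List.take_of_length_le (by rw [stepsOf_length])] at h
    rw [hγ.2.1] at h
    omega
  count_D_le_count_U i := by
    rcases le_or_gt i (2 * m) with hi | hi
    · have h := stepsOf_take_counts hγ i hi
      have h2 := hγ.2.2.1 i hi
      omega
    · rw [List.take_of_length_le (by rw [stepsOf_length]; omega)]
      have h := stepsOf_take_counts hγ (2 * m) le_rfl
      rw [List.take_of_length_le (by rw [stepsOf_length])] at h
      rw [hγ.2.1] at h
      omega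

lemma wordOf_semilength (m : ℕ) (γ : ℕ → ℤ) (hγ : IsDyckPathFn m γ) :
    (wordOf m γ hγ).semilength = m := by
  have h := (wordOf m γ hγ).two_mul_semilength_eq_length
  have h2 : (wordOf m γ hγ).toList.length = 2 * m := stepsOf_length m γ
  omega

lemma pathOf_wordOf (m : ℕ) (γ : ℕ → ℤ) (hγ : IsDyckPathFn m γ) :
    pathOf (wordOf m γ hγ) = γ := by
  funext k
  rcases le_or_gt k (2 * m) with hk | hk
  · exact stepsOf_height hγ k hk
  · show wordHeight (stepsOf m γ) k = γ k
    rw [wordHeight_of_le _ (by rw [stepsOf_length]; omega), stepsOf_length,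
      stepsOf_height hγ (2 * m) le_rfl, hγ.2.1, hγ.2.2.2.2 k (by omega)]

lemma wordOf_pathOf (p : DyckWord) :
    wordOf p.semilength (pathOf p) (pathOf_isDyck p) = p := by
  have hlen : 2 * p.semilength = p.toList.length := p.two_mul_semilength_eq_length
  have e : (wordOf p.semilength (pathOf p) (pathOf_isDyck p)).toList
      = stepsOf p.semilength (pathOf p) := rfl
  ext1
  apply List.ext_getElem
  · rw [e, stepsOf_length, hlen]
  · intro k h1 h2
    simp only [e] at h1 ⊢
    rw [stepsOf_length] at h1
    rw [stepsOf_getElem _ _ k h1]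
    have hk : k < p.toList.length := by omega
    have hstep : pathOf p (k + 1) = pathOf p k + (if p.toList[k] = U then 1 else -1) :=
      wordHeight_succ p.toList k hk
    rcases p.toList[k].dichotomy with h | h
    · rw [h]
      rw [if_pos] ; rw [hstep, if_pos h]
    · rw [h]
      rw [if_neg]
      rw [hstep, if_neg (by rw [h]; simp)]
      omega

/-- The number of Dyck path functions of length `2m` is `catalan m`. -/
lemma card_dyckPathFn (m : ℕ) :
    Nat.card {γ : ℕ → ℤ | IsDyckPathFn m γ} = catalan m := by
  rw [← DyckWord.card_dyckWord_semilength_eq_catalan m, ← Nat.card_eq_fintype_card]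
  apply Nat.card_congr
  exact
    { toFun := fun γ => ⟨wordOf m γ.1 γ.2, wordOf_semilength m γ.1 γ.2⟩
      invFun := fun p => ⟨pathOf p.1, by
        have := pathOf_isDyck p.1; rwa [p.2] at this⟩
      left_inv := fun γ => Subtype.ext (pathOf_wordOf m γ.1 γ.2)
      right_inv := fun p => by
        obtain ⟨p, hp⟩ := p
        subst hp
        exact Subtype.ext (wordOf_pathOf p) }

/-! ### Parity -/

lemma dyck_parity {m : ℕ} {γ : ℕ → ℤ} (hγ : IsDyckPathFn m γ) :
    ∀ k, k ≤ 2 * m → γ k % 2 = (k : ℤ) % 2 := by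
  intro k
  induction k with
  | zero => intro _; rw [hγ.1]; simp
  | succ k ih =>
    intro hk
    have := ih (by omega)
    rcases hγ.2.2.2.1 k (by omega) with h | h <;> push_cast at * <;> omega

/-! ### Valley removal and insertion -/

/-- Remove the valley at positions `n-1, n, n+1`. -/
def phiMap (n : ℕ) (γ : ℕ → ℤ) : ℕ → ℤ :=
  fun k => if k ≤ n - 1 then γ k else γ (k + 2)

/-- Insert a valley at position `n`. -/
def psiMap (n : ℕ) (δ : ℕ → ℤ) : ℕ → ℤ :=
  fun k => if k < n then δ k else if k = n then δ (n - 1) - 1 else δ (k - 2)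

lemma phiMap_spec {n : ℕ} (hn : 1 ≤ n) {γ : ℕ → ℤ} (hγ : IsDyckPathFn n γ)
    (h1 : γ (n - 1) = γ n + 1) (h2 : γ (n + 1) = γ n + 1) :
    IsDyckPathFn (n - 1) (phiMap n γ) ∧ phiMap n γ (n - 1) = γ n + 1 := by
  have key : ∀ k, n - 1 ≤ k → phiMap n γ k = γ (k + 2) := by
    intro k hk
    rcases eq_or_lt_of_le hk with h | h
    · rw [phiMap]
      simp only [← h, le_refl, if_pos]
      rw [show n - 1 + 2 = n + 1 by omega, h2, ← h1]
    · rw [phiMap, if_neg (by omega)]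
  have key2 : ∀ k, k ≤ n - 1 → phiMap n γ k = γ k := by
    intro k hk; rw [phiMap, if_pos hk]
  constructor
  · refine ⟨?_, ?_, ?_, ?_, ?_⟩
    · rw [key2 0 (by omega), hγ.1]
    · rcases Nat.eq_or_lt_of_le hn with h | h
      · rw [key2 _ (by omega)]
        rw [show 2 * (n - 1) = 0 by omega, hγ.1]
      · rw [key _ (by omega), show 2 * (n - 1) + 2 = 2 * n by omega, hγ.2.1]
    · intro x hx
      rcases le_or_gt x (n - 1) with h | h
      · rw [key2 x h]; exact hγ.2.2.1 x (by omega)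
      · rw [key x (by omega)]; exact hγ.2.2.1 (x + 2) (by omega)
    · intro x hx
      rcases le_or_gt (x + 1) (n - 1) with h | h
      · rw [key2 x (by omega), key2 (x + 1) h]
        exact hγ.2.2.2.1 x (by omega)
      · rw [key x (by omega), key (x + 1) (by omega)]
        exact hγ.2.2.2.1 (x + 2) (by omega)
    · intro x hx
      rcases le_or_gt x (n - 1) with h | h
      · -- then x = n - 1 = 2*(n-1), so n = 1, x = 0
        rw [key2 x h, show x = 0 by omega, hγ.1]
      · rw [key x (by omega)]
        exact hγ.2.2.2.2 (x + 2) (by omega)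
  · rw [key2 _ le_rfl, h1]

lemma psiMap_spec {n : ℕ} (hn : 1 ≤ n) {δ : ℕ → ℤ} (hδ : IsDyckPathFn (n - 1) δ)
    (h1 : 1 ≤ δ (n - 1)) :
    IsDyckPathFn n (psiMap n δ) ∧ psiMap n δ (n - 1) = δ (n - 1) ∧
      psiMap n δ n = δ (n - 1) - 1 ∧ psiMap n δ (n + 1) = δ (n - 1) := by
  have key1 : ∀ k, k < n → psiMap n δ k = δ k := by
    intro k hk; rw [psiMap, if_pos hk]
  have keyn : psiMap n δ n = δ (n - 1) - 1 := by
    rw [psiMap, if_neg (lt_irrefl n), if_pos rfl]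
  have key2 : ∀ k, n < k → psiMap n δ k = δ (k - 2) := by
    intro k hk; rw [psiMap, if_neg (by omega), if_neg (by omega)]
  refine ⟨⟨?_, ?_, ?_, ?_, ?_⟩, key1 _ (by omega), keyn, ?_⟩
  · rw [key1 0 (by omega), hδ.1]
  · rw [key2 (2 * n) (by omega), show 2 * n - 2 = 2 * (n - 1) by omega, hδ.2.1]
  · intro x hx
    rcases lt_trichotomy x n with h | h | h
    · rw [key1 x h]; exact hδ.2.2.1 x (by omega)
    · rw [h, keyn]; omega
    · rw [key2 x h]; exact hδ.2.2.1 (x - 2) (by omega)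
  · intro x hx
    rcases lt_trichotomy (x + 1) n with h | h | h
    · rw [key1 x (by omega), key1 (x + 1) h]
      exact hδ.2.2.2.1 x (by omega)
    · right
      rw [h, keyn, key1 x (by omega), show x = n - 1 by omega]
    · rcases Nat.eq_or_lt_of_le (show n ≤ x by omega) with h' | h'
      · left
        rw [← h', keyn, key2 (n + 1) (by omega), show n + 1 - 2 = n - 1 by omega]
        ring
      · rw [key2 x h', key2 (x + 1) (by omega),
          show x + 1 - 2 = x - 2 + 1 by omega]
        exact hδ.2.2.2.1 (x - 2) (by omega)
  · intro x hx
    rw [key2 x (by omega)]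
    exact hδ.2.2.2.2 (x - 2) (by omega)
  · rw [key2 (n + 1) (by omega), show n + 1 - 2 = n - 1 by omega]

lemma psiMap_phiMap {n : ℕ} (hn : 1 ≤ n) {γ : ℕ → ℤ}
    (h1 : γ (n - 1) = γ n + 1) (h2 : γ (n + 1) = γ n + 1) :
    psiMap n (phiMap n γ) = γ := by
  funext k
  rcases lt_trichotomy k n with h | h | h
  · rw [psiMap]
    rw [if_pos h, phiMap, if_pos (by omega)]
  · rw [psiMap, if_neg (by omega), if_pos h, phiMap, if_pos le_rfl, h1, h]
    ring
  · rw [psiMap, if_neg (by omega), if_neg (by omega), phiMap]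
    rcases Nat.eq_or_lt_of_le (show n + 1 ≤ k by omega) with h' | h'
    · rw [if_pos (by omega), show k - 2 = n - 1 by omega, h1, ← h2, h']
    · rw [if_neg (by omega), show k - 2 + 2 = k by omega]

lemma phiMap_psiMap {n : ℕ} (hn : 1 ≤ n) (δ : ℕ → ℤ) :
    phiMap n (psiMap n δ) = δ := by
  funext k
  rcases le_or_gt k (n - 1) with h | h
  · rw [phiMap, if_pos h, psiMap, if_pos (by omega)]
  · rw [phiMap, if_neg (by omega), psiMap, if_neg (by omega), if_neg (by omega),
      show k + 2 - 2 = k by omega]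

/-! ### Main theorem -/

/-- The Dyck paths of length `2n` with a local minimum at height `h` at position
`n` are in bijection with Dyck paths of length `2n - 2` passing through
`(n - 1, h + 1)`; in particular, for even `n` the number of Dyck paths of length
`2n` with a local minimum at `n` is the Catalan number `C (n-1)`. -/
theorem dyck_local_min_count (n : ℕ) (hn : 1 ≤ n) :
    (∀ h : ℤ, 0 ≤ h →
      Nat.card {γ : ℕ → ℤ | IsDyckPathFn n γ ∧
          γ (n - 1) = h + 1 ∧ γ n = h ∧ γ (n + 1) = h + 1}
        = Nat.card {γ : ℕ → ℤ | IsDyckPathFn (n - 1) γ ∧ γ (n - 1) = h + 1}) ∧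
    (Even n →
      Nat.card {γ : ℕ → ℤ | IsDyckPathFn n γ ∧
          γ (n - 1) = γ n + 1 ∧ γ (n + 1) = γ n + 1} = catalan (n - 1)) := by
  constructor
  · intro h hh
    apply Nat.card_congr
    refine
      { toFun := fun γ => ⟨phiMap n γ.1, ?_⟩
        invFun := fun δ => ⟨psiMap n δ.1, ?_⟩
        left_inv := fun γ => ?_
        right_inv := fun δ => ?_ }
    · obtain ⟨hγ, e1, e2, e3⟩ := γ.2
      have := phiMap_spec hn hγ (by rw [e1, e2]) (by rw [e3, e2])
      exact ⟨this.1, by rw [this.2, e2]⟩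
    · obtain ⟨hδ, e1⟩ := δ.2
      have := psiMap_spec hn hδ (by rw [e1]; omega)
      refine ⟨this.1, by rw [this.2.1, e1], by rw [this.2.2.1, e1]; ring, by rw [this.2.2.2, e1]⟩
    · obtain ⟨hγ, e1, e2, e3⟩ := γ.2
      exact Subtype.ext (psiMap_phiMap hn (by rw [e1, e2]) (by rw [e3, e2]))
    · exact Subtype.ext (phiMap_psiMap hn δ.1)
  · intro hev
    rw [← card_dyckPathFn (n - 1)]
    apply Nat.card_congr
    refine
      { toFun := fun γ => ⟨phiMap n γ.1, ?_⟩
        invFun := fun δ => ⟨psiMap n δ.1, ?_⟩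
        left_inv := fun γ => ?_
        right_inv := fun δ => ?_ }
    · obtain ⟨hγ, e1, e3⟩ := γ.2
      exact (phiMap_spec hn hγ e1 e3).1
    · have hδ : IsDyckPathFn (n - 1) δ.1 := δ.2
      have hpos : 1 ≤ δ.1 (n - 1) := by
        have hpar := dyck_parity hδ (n - 1) (by omega)
        have hnonneg := hδ.2.2.1 (n - 1) (by omega)
        have h2 : 2 ≤ n := by
          rcases hev with ⟨a, ha⟩; omega
        have : ((n - 1 : ℕ) : ℤ) % 2 = 1 := by
          rcases hev with ⟨a, ha⟩
          have : (n : ℤ) = 2 * a := by omega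
          omega
        omega
      obtain ⟨hd, e1, e2, e3⟩ := psiMap_spec hn hδ hpos
      exact ⟨hd, by rw [e1, e2]; ring, by rw [e3, e2]; ring⟩
    · obtain ⟨hγ, e1, e3⟩ := γ.2
      exact Subtype.ext (psiMap_phiMap hn e1 e3)
    · exact Subtype.ext (phiMap_psiMap hn δ.1)
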